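/- The formula Ξ^T defines the complement of the set of ≼-predecessors of T: for generalized causal teams S and T with T nonempty and |T/≈| = k+1, S ⊨ Ξ^T if and only if T ⋠ S, where Ξ^T := χ_k ∨ Θ^{complement of T⁻} ∨ ⋁{Θ^{{s}} ∧ Φ^F : s ∈ T⁻, F ∈ 𝔽_σ, {(s,F)} ⋠ T}. -/

import Mathlib

namespace CausalTeams

attribute [local instance] Classical.propDecidable

/-- A system of functions over a signature: each endogenous variable `V ∈ En` has a set
of parents `PA V` (not containing `V`) and a function computing its value, which depends
only on the values of its parents. -/
structure FuncSystem (Var : Type) (Val : Var → Type) : Type where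
  En : Set Var
  PA : Var → Set Var
  pa_ne : ∀ V, V ∉ PA V
  fn : ∀ V, (∀ W, Val W) → Val V
  dep_only : ∀ V (s t : ∀ W, Val W), (∀ W ∈ PA V, s W = t W) → fn V s = fn V t

variable {Var : Type} {Val : Var → Type}

/-- Assignments of values to the variables. -/
abbrev Assign (Var : Type) (Val : Var → Type) : Type := ∀ V, Val V

/-- An assignment is compatible with a system of functions if each endogenous variable's
value is the one generated by its function. -/
def Compat (s : Assign Var Val) (F : FuncSystem Var Val) : Prop :=
  ∀ V ∈ F.En, s V = F.fn V s

/-- The endogenous variables whose generating function is constant. -/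
def Cn (F : FuncSystem Var Val) : Set Var :=
  {V | V ∈ F.En ∧ ∀ s t : Assign Var Val, F.fn V s = F.fn V t}

/-- The functions for `V` in `F` and `G` are equivalent up to dummy arguments: they agree
whenever their arguments agree on the common parents of `V`. -/
def fnEquiv (F G : FuncSystem Var Val) (V : Var) : Prop :=
  ∀ s t : Assign Var Val,
    (∀ W, W ∈ F.PA V → W ∈ G.PA V → s W = t W) → F.fn V s = G.fn V t

/-- Equivalence of systems of functions up to dummy arguments. -/
def sysEquiv (F G : FuncSystem Var Val) : Prop :=
  F.En \ Cn F = G.En \ Cn G ∧ ∀ V ∈ F.En \ Cn F, fnEquiv F G V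

/-- The edge relation of the causal graph of `F`. -/
def Edge (F : FuncSystem Var Val) (W V : Var) : Prop := V ∈ F.En ∧ W ∈ F.PA V

/-- `F` is recursive: its causal graph is acyclic. -/
def RecursiveSys (F : FuncSystem Var Val) : Prop :=
  ∀ V, ¬ Relation.TransGen (Edge F) V V

/-- The system of functions resulting from the intervention `do(X = x)`: the variables of
`X` are made exogenous; parents and functions of the remaining endogenous variables are kept. -/
def restrictSys (F : FuncSystem Var Val) (X : Finset Var) : FuncSystem Var Val where
  En := F.En \ ↑X
  PA := F.PA
  pa_ne := F.pa_ne
  fn := F.fn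
  dep_only := F.dep_only

section InterveneAssign
variable [DecidableEq Var] [Fintype Var]

/-- One step of recomputation after the intervention `do(X = x)`. -/
noncomputable def stepFn (F : FuncSystem Var Val) (X : Finset Var) (x : Assign Var Val)
    (s : Assign Var Val) : Assign Var Val :=
  fun V => if V ∈ X then x V else if V ∈ F.En then F.fn V s else s V

/-- The result of the intervention `do(X = x)` on the assignment `s`
(for recursive systems, iterating the recomputation step sufficiently many times
reaches the fixed point). -/
noncomputable def interveneAssign (F : FuncSystem Var Val) (X : Finset Var) (x : Assign Var Val)
    (s : Assign Var Val) : Assign Var Val :=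
  (stepFn F X x)^[Fintype.card Var + 1] s

end InterveneAssign

/-- Formulas: equality atoms `V = v`, dependence atoms `=(Xs; Y)`, negation, conjunction,
tensor disjunction, global disjunction, and interventionist counterfactuals
`X = x □→ φ` (the antecedent is a finite set of variables together with the values
imposed on them, read off from an assignment; such antecedents are always consistent). -/
inductive Formula (Var : Type) (Val : Var → Type) : Type where
  | eq : (V : Var) → Val V → Formula Var Val
  | dep : List Var → Var → Formula Var Val
  | neg : Formula Var Val → Formula Var Val
  | and : Formula Var Val → Formula Var Val → Formula Var Val
  | or : Formula Var Val → Formula Var Val → Formula Var Val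
  | gor : Formula Var Val → Formula Var Val → Formula Var Val
  | cf : Finset Var → Assign Var Val → Formula Var Val → Formula Var Val

/-- CO-formulas: no dependence atoms, no global disjunction. -/
def IsCO : Formula Var Val → Prop
  | .eq _ _ => True
  | .dep _ _ => False
  | .neg φ => IsCO φ
  | .and φ ψ => IsCO φ ∧ IsCO ψ
  | .or φ ψ => IsCO φ ∧ IsCO ψ
  | .gor _ _ => False
  | .cf _ _ φ => IsCO φ

/-- COD-formulas: CO plus dependence atoms; negation applies only to CO-formulas. -/
def IsCOD : Formula Var Val → Prop
  | .eq _ _ => True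
  | .dep _ _ => True
  | .neg φ => IsCO φ
  | .and φ ψ => IsCOD φ ∧ IsCOD ψ
  | .or φ ψ => IsCOD φ ∧ IsCOD ψ
  | .gor _ _ => False
  | .cf _ _ φ => IsCOD φ

/-- CO_⤘-formulas: CO plus global disjunction; negation applies only to CO-formulas. -/
def IsCOglobal : Formula Var Val → Prop
  | .eq _ _ => True
  | .dep _ _ => False
  | .neg φ => IsCO φ
  | .and φ ψ => IsCOglobal φ ∧ IsCOglobal ψ
  | .or φ ψ => IsCOglobal φ ∧ IsCOglobal ψ
  | .gor φ ψ => IsCOglobal φ ∧ IsCOglobal ψ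
  | .cf _ _ φ => IsCOglobal φ

/-- Counterfactual-free formulas: no occurrence of `□→`. -/
def CFFree : Formula Var Val → Prop
  | .eq _ _ => True
  | .dep _ _ => True
  | .neg φ => CFFree φ
  | .and φ ψ => CFFree φ ∧ CFFree ψ
  | .or φ ψ => CFFree φ ∧ CFFree ψ
  | .gor φ ψ => CFFree φ ∧ CFFree ψ
  | .cf _ _ _ => False

section Semantics
variable [DecidableEq Var] [Fintype Var]

/-- Causal team semantics: satisfaction of a formula by a team of assignments together
with a system of functions. -/
noncomputable def csat : FuncSystem Var Val → Set (Assign Var Val) → Formula Var Val → Prop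
  | _, T, .eq V v => ∀ s ∈ T, s V = v
  | _, T, .dep Xs Y => ∀ s ∈ T, ∀ t ∈ T, (∀ W ∈ Xs, s W = t W) → s Y = t Y
  | F, T, .neg φ => ∀ s ∈ T, ¬ csat F {s} φ
  | F, T, .and φ ψ => csat F T φ ∧ csat F T ψ
  | F, T, .or φ ψ => ∃ T₁ T₂, T₁ ∪ T₂ = T ∧ csat F T₁ φ ∧ csat F T₂ ψ
  | F, T, .gor φ ψ => csat F T φ ∨ csat F T ψ
  | F, T, .cf X x φ => csat (restrictSys F X) (interveneAssign F X x '' T) φ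

end Semantics

/-- Generalized causal teams: sets of pairs of an assignment and a system of functions. -/
abbrev GCT (Var : Type) (Val : Var → Type) : Type :=
  Set (Assign Var Val × FuncSystem Var Val)

/-- The team component of a generalized causal team. -/
def teamOf (T : GCT Var Val) : Set (Assign Var Val) := Prod.fst '' T

/-- A genuine (recursive) generalized causal team: all pairs are compatible and all
function components are recursive. -/
def IsGCT (T : GCT Var Val) : Prop := ∀ p ∈ T, Compat p.1 p.2 ∧ RecursiveSys p.2

section GSemantics
variable [DecidableEq Var] [Fintype Var]

/-- Pointwise intervention on a generalized causal team. -/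
noncomputable def gIntervene (T : GCT Var Val) (X : Finset Var) (x : Assign Var Val) : GCT Var Val :=
  (fun p => (interveneAssign p.2 X x p.1, restrictSys p.2 X)) '' T

/-- Generalized causal team semantics. -/
noncomputable def gsat : GCT Var Val → Formula Var Val → Prop
  | T, .eq V v => ∀ p ∈ T, p.1 V = v
  | T, .dep Xs Y => ∀ p ∈ T, ∀ q ∈ T, (∀ W ∈ Xs, p.1 W = q.1 W) → p.1 Y = q.1 Y
  | T, .neg φ => ∀ p ∈ T, ¬ gsat {p} φ
  | T, .and φ ψ => gsat T φ ∧ gsat T ψ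
  | T, .or φ ψ => ∃ T₁ T₂, T₁ ∪ T₂ = T ∧ gsat T₁ φ ∧ gsat T₂ ψ
  | T, .gor φ ψ => gsat T φ ∨ gsat T ψ
  | T, .cf X x φ => gsat (gIntervene T X x) φ

end GSemantics

/-- Equivalence of generalized causal teams: for each system of functions `F`, the
assignments occurring together with a function component `∼`-similar to `F` are the same. -/
def gctEquiv (S T : GCT Var Val) : Prop :=
  ∀ F : FuncSystem Var Val,
    {s | ∃ G, (s, G) ∈ S ∧ sysEquiv G F} = {s | ∃ G, (s, G) ∈ T ∧ sysEquiv G F}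

/-- `S ≼ T` iff `S ≈ R ⊆ T` for some `R`. -/
def sle (S T : GCT Var Val) : Prop := ∃ R : GCT Var Val, gctEquiv S R ∧ R ⊆ T

/-- The generalized causal team generated by a causal team. -/
def toGCT (team : Set (Assign Var Val)) (F : FuncSystem Var Val) : GCT Var Val :=
  (fun s => (s, F)) '' team

/-- Equivalence of elements of generalized causal teams: same assignment and
`∼`-similar function components. -/
def pairEquiv (p q : Assign Var Val × FuncSystem Var Val) : Prop :=
  p.1 = q.1 ∧ sysEquiv p.2 q.2

/-- The quotient `T/≈` has at most `k` elements: `T` is covered by `k` representatives. -/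
def quotCardLE (T : GCT Var Val) (k : ℕ) : Prop :=
  ∃ R : Finset (Assign Var Val × FuncSystem Var Val),
    R.card ≤ k ∧ ∀ p ∈ T, ∃ q ∈ R, pairEquiv p q

section Entailment
variable [DecidableEq Var] [Fintype Var]

/-- Entailment over (recursive) generalized causal teams. -/
def gEntails (Δ : Set (Formula Var Val)) (α : Formula Var Val) : Prop :=
  ∀ T : GCT Var Val, IsGCT T → (∀ γ ∈ Δ, gsat T γ) → gsat T α

/-- Entailment over (recursive) causal teams. -/
def cEntails (Δ : Set (Formula Var Val)) (α : Formula Var Val) : Prop :=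
  ∀ (F : FuncSystem Var Val) (team : Set (Assign Var Val)),
    RecursiveSys F → (∀ s ∈ team, Compat s F) →
    (∀ γ ∈ Δ, csat F team γ) → csat F team α

/-- Causal incompatibility of two formulas. -/
def Incompatible (φ ψ : Formula Var Val) : Prop :=
  ∀ (F G : FuncSystem Var Val) (S T : Set (Assign Var Val)),
    S.Nonempty → T.Nonempty → RecursiveSys F → RecursiveSys G →
    (∀ s ∈ S, Compat s F) → (∀ t ∈ T, Compat t G) →
    csat F S φ → csat G T ψ → ¬ sysEquiv F G

end Entailment

section FormulaHelpers
variable [DecidableEq Var] [Fintype Var] [Nonempty Var]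
  [∀ V, Fintype (Val V)] [∀ V, Nonempty (Val V)]

/-- The falsum formula `⊥ := V = v ∧ V ≠ v`. -/
noncomputable def falsum : Formula Var Val :=
  let V := Classical.arbitrary Var
  Formula.and (Formula.eq V (Classical.arbitrary (Val V)))
    (Formula.neg (Formula.eq V (Classical.arbitrary (Val V))))

/-- Finite conjunction (the empty conjunction is `¬⊥`). -/
noncomputable def bigAnd : List (Formula Var Val) → Formula Var Val
  | [] => Formula.neg falsum
  | [φ] => φ
  | φ :: l => Formula.and φ (bigAnd l)

/-- Finite tensor disjunction (the empty disjunction is `⊥`). -/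
noncomputable def bigOr : List (Formula Var Val) → Formula Var Val
  | [] => falsum
  | [φ] => φ
  | φ :: l => Formula.or φ (bigOr l)

/-- Finite global disjunction (the empty disjunction is `⊥`). -/
noncomputable def bigGor : List (Formula Var Val) → Formula Var Val
  | [] => falsum
  | [φ] => φ
  | φ :: l => Formula.gor φ (bigGor l)

/-- The conjunction `⋀_{V ∈ Dom} V = s(V)` describing the assignment `s`. -/
noncomputable def eqConj (s : Assign Var Val) : Formula Var Val :=
  bigAnd ((Finset.univ : Finset Var).toList.map fun V => Formula.eq V (s V))

/-- `Θ^A := ⋁_{s ∈ A} ⋀_{V ∈ Dom} V = s(V)`. -/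
noncomputable def Theta (A : Finset (Assign Var Val)) : Formula Var Val :=
  bigOr (A.toList.map eqConj)

/-- The constancy atom `=(V)`. -/
def conAtom (V : Var) : Formula Var Val := Formula.dep [] V

/-- `μ := ⋀_{V ∈ Dom} ⋀_{w} (W_V = w □→ =(V))` where `W_V = Dom \ {V}`. -/
noncomputable def muForm : Formula Var Val :=
  bigAnd ((Finset.univ : Finset Var).toList.map fun V =>
    bigAnd (((Finset.univ : Finset (Assign Var Val))).toList.map fun w =>
      Formula.cf ((Finset.univ : Finset Var).erase V) w (conAtom V)))

/-- `χ := μ ∧ ⋀_{V ∈ Dom} =(V)`. -/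
noncomputable def chiForm : Formula Var Val :=
  Formula.and muForm (bigAnd ((Finset.univ : Finset Var).toList.map conAtom))

/-- `χ_k`: the `k`-fold tensor disjunction of `χ` (with `χ_0 := ⊥`). -/
noncomputable def chiK : ℕ → Formula Var Val
  | 0 => falsum
  | 1 => chiForm
  | n + 2 => Formula.or chiForm (chiK (n + 1))

end FormulaHelpers


section AuxLemmas

variable {Var : Type} {Val : Var → Type}

lemma sysEquiv_refl (F : FuncSystem Var Val) : sysEquiv F F :=
  ⟨rfl, fun V _ s t h => F.dep_only V s t fun W hW => h W hW hW⟩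

lemma sysEquiv_symm {F G : FuncSystem Var Val} (h : sysEquiv F G) : sysEquiv G F := by
  refine ⟨h.1.symm, fun V hV s t hst => ?_⟩
  have hVF : V ∈ F.En \ Cn F := by rw [h.1]; exact hV
  exact (h.2 V hVF t s (fun W h1 h2 => (hst W h2 h1).symm)).symm

lemma sysEquiv_trans {F G H : FuncSystem Var Val} (h1 : sysEquiv F G) (h2 : sysEquiv G H) :
    sysEquiv F H := by
  classical
  refine ⟨h1.1.trans h2.1, fun V hV s t hst => ?_⟩
  set r : Assign Var Val := fun W => if W ∈ F.PA V then s W else t W with hr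
  have e1 : F.fn V s = G.fn V r := h1.2 V hV s r (fun W hF _ => by simp [hr, hF])
  have e2 : G.fn V r = H.fn V t := by
    refine h2.2 V (by rw [← h1.1]; exact hV) r t (fun W hG hH => ?_)
    by_cases hF : W ∈ F.PA V
    · simpa [hr, hF] using hst W hF hH
    · simp [hr, hF]
  exact e1.trans e2

lemma pairEquiv_refl (p : Assign Var Val × FuncSystem Var Val) : pairEquiv p p :=
  ⟨rfl, sysEquiv_refl _⟩

lemma pairEquiv_symm {p q : Assign Var Val × FuncSystem Var Val} (h : pairEquiv p q) :
    pairEquiv q p := ⟨h.1.symm, sysEquiv_symm h.2⟩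

lemma pairEquiv_trans {p q r : Assign Var Val × FuncSystem Var Val}
    (h1 : pairEquiv p q) (h2 : pairEquiv q r) : pairEquiv p r :=
  ⟨h1.1.trans h2.1, sysEquiv_trans h1.2 h2.2⟩

lemma IsGCT.mono {S A : GCT Var Val} (hS : IsGCT S) (h : A ⊆ S) : IsGCT A :=
  fun p hp => hS p (h hp)

section SemLemmas
variable [DecidableEq Var] [Fintype Var] [Nonempty Var]
  [∀ V, Fintype (Val V)] [∀ V, Nonempty (Val V)]

lemma gsat_falsum_iff (T : GCT Var Val) : gsat T (falsum : Formula Var Val) ↔ T = ∅ := by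
  simp only [falsum, gsat]
  constructor
  · rintro ⟨h1, h2⟩
    ext p
    simp only [Set.mem_empty_iff_false, iff_false]
    intro hp
    exact h2 p hp (fun q hq => by rw [Set.mem_singleton_iff] at hq; rw [hq]; exact h1 p hp)
  · rintro rfl
    exact ⟨fun p hp => absurd hp (by simp), fun p hp => absurd hp (by simp)⟩

lemma gsat_bigAnd_iff (T : GCT Var Val) (l : List (Formula Var Val)) :
    gsat T (bigAnd l) ↔ ∀ φ ∈ l, gsat T φ := by
  induction l with
  | nil =>
    simp only [bigAnd, List.not_mem_nil, false_implies, implies_true, iff_true, gsat]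
    intro p hp hf
    exact hf.2 p (Set.mem_singleton p) hf.1
  | cons φ l ih =>
    cases l with
    | nil => simp [bigAnd]
    | cons ψ l =>
      show gsat T (Formula.and φ (bigAnd (ψ :: l))) ↔ _
      simp only [gsat, ih]
      constructor
      · rintro ⟨h1, h2⟩ χ hχ
        rcases List.mem_cons.1 hχ with rfl | hχ
        · exact h1
        · exact h2 χ hχ
      · intro h
        exact ⟨h φ (by simp), fun χ hχ => h χ (by simp [hχ])⟩

lemma gsat_bigOr_elim {T : GCT Var Val} {l : List (Formula Var Val)}
    (h : gsat T (bigOr l)) : ∀ p ∈ T, ∃ φ ∈ l, ∃ R, R ⊆ T ∧ p ∈ R ∧ gsat R φ := by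
  induction l generalizing T with
  | nil =>
    rw [bigOr, gsat_falsum_iff] at h
    subst h; simp
  | cons φ l ih =>
    cases l with
    | nil =>
      intro p hp
      exact ⟨φ, by simp, T, subset_rfl, hp, h⟩
    | cons ψ l =>
      obtain ⟨T₁, T₂, hU, h1, h2⟩ := h
      intro p hp
      rw [← hU] at hp
      rcases hp with hp | hp
      · exact ⟨φ, by simp, T₁, by rw [← hU]; exact Set.subset_union_left, hp, h1⟩
      · obtain ⟨χ, hχ, R, hR, hpR, hg⟩ := ih h2 p hp
        exact ⟨χ, by simp [hχ], R,
          hR.trans (by rw [← hU]; exact Set.subset_union_right), hpR, hg⟩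

lemma gsat_bigOr_map_intro {α : Type*} {T : GCT Var Val} (L : List α)
    (g : α → Formula Var Val) (f : Fin L.length → GCT Var Val)
    (hU : (⋃ i, f i) = T) (h : ∀ i, gsat (f i) (g (L.get i))) :
    gsat T (bigOr (L.map g)) := by
  induction L generalizing T with
  | nil =>
    rw [List.map_nil, bigOr, gsat_falsum_iff, ← hU]
    simp
  | cons a L ih =>
    cases L with
    | nil =>
      have : T = f ⟨0, by simp⟩ := by
        rw [← hU]; ext x; constructor
        · rintro ⟨s, ⟨i, rfl⟩, hx⟩
          have : i = ⟨0, by simp⟩ := by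
            apply Fin.ext
            show i.val = 0
            have : i.val < 1 := i.isLt
            omega
          rwa [← this]
        · intro hx; exact ⟨f ⟨0, by simp⟩, ⟨⟨0, by simp⟩, rfl⟩, hx⟩
      rw [List.map_cons, List.map_nil]
      show gsat T (bigOr [g a])
      rw [bigOr, this]
      exact h ⟨0, by simp⟩
    | cons b L =>
      show gsat T (Formula.or (g a) (bigOr ((b :: L).map g)))
      refine ⟨f ⟨0, by simp⟩, ⋃ j : Fin (b :: L).length, f j.succ, ?_, h ⟨0, by simp⟩, ?_⟩
      · rw [← hU]; ext x
        simp only [Set.mem_union, Set.mem_iUnion]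
        constructor
        · rintro (hx | ⟨j, hx⟩)
          · exact ⟨⟨0, by simp⟩, hx⟩
          · exact ⟨j.succ, hx⟩
        · rintro ⟨i, hx⟩
          rcases Fin.eq_zero_or_eq_succ i with rfl | ⟨j, rfl⟩
          · exact Or.inl hx
          · exact Or.inr ⟨j, hx⟩
      · exact ih (fun j => f j.succ) rfl (fun j => h j.succ)

lemma gsat_eqConj_iff (T : GCT Var Val) (s : Assign Var Val) :
    gsat T (eqConj s) ↔ ∀ p ∈ T, p.1 = s := by
  rw [eqConj, gsat_bigAnd_iff]
  constructor
  · intro h p hp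
    funext V
    have := h (Formula.eq V (s V)) (by simp)
    exact this p hp
  · intro h φ hφ
    simp only [List.mem_map] at hφ
    obtain ⟨V, _, rfl⟩ := hφ
    exact fun p hp => by rw [h p hp]

lemma gsat_Theta_iff (T : GCT Var Val) (A : Finset (Assign Var Val)) :
    gsat T (Theta A) ↔ ∀ p ∈ T, p.1 ∈ A := by
  constructor
  · intro h p hp
    obtain ⟨φ, hφ, R, _, hpR, hg⟩ := gsat_bigOr_elim h p hp
    simp only [List.mem_map, Finset.mem_toList] at hφ
    obtain ⟨t, ht, rfl⟩ := hφ
    rw [gsat_eqConj_iff] at hg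
    rw [hg p hpR]; exact ht
  · intro h
    refine gsat_bigOr_map_intro A.toList eqConj
      (fun i => {p ∈ T | p.1 = A.toList.get i}) ?_ ?_
    · ext p
      simp only [Set.mem_iUnion, Set.mem_setOf_eq]
      constructor
      · rintro ⟨i, hp, _⟩; exact hp
      · intro hp
        have := h p hp
        rw [← Finset.mem_toList, List.mem_iff_get] at this
        obtain ⟨i, hi⟩ := this
        exact ⟨i, hp, hi.symm⟩
    · intro i
      rw [gsat_eqConj_iff]
      exact fun p hp => hp.2


lemma interveneAssign_mem_erase (F : FuncSystem Var Val) (x s : Assign Var Val)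
    {V W : Var} (hW : W ≠ V) :
    interveneAssign F (Finset.univ.erase V) x s W = x W := by
  rw [interveneAssign, Function.iterate_succ_apply']
  simp [stepFn, hW]

lemma interveneAssign_not_en (F : FuncSystem Var Val) (x s : Assign Var Val)
    {V : Var} (hEn : V ∉ F.En) :
    interveneAssign F (Finset.univ.erase V) x s V = s V := by
  rw [interveneAssign]
  generalize Fintype.card Var + 1 = n
  induction n with
  | zero => rfl
  | succ n ih =>
    rw [Function.iterate_succ_apply']
    simp [stepFn, hEn, ih]

lemma interveneAssign_en (F : FuncSystem Var Val) (x s : Assign Var Val)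
    {V : Var} (hEn : V ∈ F.En) (a : Assign Var Val) (ha : ∀ W ∈ F.PA V, a W = x W) :
    interveneAssign F (Finset.univ.erase V) x s V = F.fn V a := by
  have hc : 1 ≤ Fintype.card Var := Fintype.card_pos
  rw [interveneAssign]
  obtain ⟨m, hm⟩ : ∃ m, Fintype.card Var = m + 1 := ⟨Fintype.card Var - 1, by omega⟩
  rw [hm, Function.iterate_succ_apply']
  set t := (stepFn F (Finset.univ.erase V) x)^[m + 1] s with ht
  have hstep : stepFn F (Finset.univ.erase V) x t V = F.fn V t := by
    simp [stepFn, hEn]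
  rw [hstep]
  refine F.dep_only V t a (fun W hW => ?_)
  have hWV : W ≠ V := fun h => F.pa_ne V (h ▸ hW)
  have h1 : t W = x W := by
    rw [ht, Function.iterate_succ_apply']
    simp [stepFn, hWV]
  rw [h1, ha W hW]

/-- For a compatible pair, if `V` is not non-constant endogenous, intervention on all
other variables leaves `V`'s value unchanged. -/
lemma interveneAssign_self {F : FuncSystem Var Val} {s : Assign Var Val}
    (hF : Compat s F) (x : Assign Var Val) {V : Var} (hV : V ∉ F.En \ Cn F) :
    interveneAssign F (Finset.univ.erase V) x s V = s V := by
  by_cases hEn : V ∈ F.En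
  · have hCn : V ∈ Cn F := by
      by_contra h
      exact hV ⟨hEn, h⟩
    rw [interveneAssign_en F x s hEn x (fun _ _ => rfl), hCn.2 x s, ← hF V hEn]
  · exact interveneAssign_not_en F x s hEn

private lemma subEn {s : Assign Var Val} {F G : FuncSystem Var Val}
    (hF : Compat s F) (hG : Compat s G)
    (h : ∀ (V : Var) (w : Assign Var Val),
      interveneAssign F (Finset.univ.erase V) w s V
        = interveneAssign G (Finset.univ.erase V) w s V) :
    F.En \ Cn F ⊆ G.En \ Cn G := by
  intro V hV
  obtain ⟨a, b, hab⟩ : ∃ a b, F.fn V a ≠ F.fn V b := by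
    by_contra hcon
    push_neg at hcon
    exact hV.2 ⟨hV.1, hcon⟩
  have hFa : ∀ c : Assign Var Val,
      interveneAssign F (Finset.univ.erase V) c s V = F.fn V c :=
    fun c => interveneAssign_en F c s hV.1 c (fun _ _ => rfl)
  by_contra hVG
  have h1 : ∀ c : Assign Var Val,
      interveneAssign G (Finset.univ.erase V) c s V = s V :=
    fun c => interveneAssign_self hG c hVG
  have ha := (hFa a).symm.trans ((h V a).trans (h1 a))
  have hb := (hFa b).symm.trans ((h V b).trans (h1 b))
  exact hab (ha.trans hb.symm)

/-- Central lemma: two compatible systems over the same assignment are equivalent iff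
all total interventions produce the same values. -/
lemma sysEquiv_iff_intervene {s : Assign Var Val} {F G : FuncSystem Var Val}
    (hF : Compat s F) (hG : Compat s G) :
    sysEquiv F G ↔ ∀ (V : Var) (w : Assign Var Val),
      interveneAssign F (Finset.univ.erase V) w s V
        = interveneAssign G (Finset.univ.erase V) w s V := by
  classical
  constructor
  · intro hsys V w
    by_cases hV : V ∈ F.En \ Cn F
    · have hVG : V ∈ G.En \ Cn G := by rw [← hsys.1]; exact hV
      have h1 : interveneAssign F (Finset.univ.erase V) w s V = F.fn V w :=
        interveneAssign_en F w s hV.1 w (fun _ _ => rfl)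
      have h2 : interveneAssign G (Finset.univ.erase V) w s V = G.fn V w :=
        interveneAssign_en G w s hVG.1 w (fun _ _ => rfl)
      rw [h1, h2]
      exact hsys.2 V hV w w (fun _ _ _ => rfl)
    · have hVG : V ∉ G.En \ Cn G := by rw [← hsys.1]; exact hV
      rw [interveneAssign_self hF w hV, interveneAssign_self hG w hVG]
  · intro h
    have hset : F.En \ Cn F = G.En \ Cn G :=
      Set.Subset.antisymm (subEn hF hG h)
        (subEn hG hF (fun V w => (h V w).symm))
    refine ⟨hset, fun V hV s' t' hst => ?_⟩
    have hVG : V ∈ G.En \ Cn G := by rw [← hset]; exact hV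
    set w : Assign Var Val := fun W => if W ∈ F.PA V then s' W else t' W with hw
    have h1 : interveneAssign F (Finset.univ.erase V) w s V = F.fn V s' :=
      interveneAssign_en F w s hV.1 s' (fun W hW => by simp [hw, hW])
    have h2 : interveneAssign G (Finset.univ.erase V) w s V = G.fn V t' := by
      refine interveneAssign_en G w s hVG.1 t' (fun W hW => ?_)
      by_cases hWF : W ∈ F.PA V
      · simp [hw, hWF, hst W hWF hW]
      · simp [hw, hWF]
    rw [← h1, ← h2]
    exact h V w

lemma gsat_chiForm_iff (S : GCT Var Val) (hS : IsGCT S) :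
    gsat S (chiForm : Formula Var Val) ↔ ∀ p ∈ S, ∀ q ∈ S, pairEquiv p q := by
  have hmu : gsat S (muForm : Formula Var Val) ↔
      ∀ (V : Var) (w : Assign Var Val), ∀ p ∈ S, ∀ q ∈ S,
        interveneAssign p.2 (Finset.univ.erase V) w p.1 V
          = interveneAssign q.2 (Finset.univ.erase V) w q.1 V := by
    rw [muForm, gsat_bigAnd_iff]
    constructor
    · intro h V w p hp q hq
      have h1 := h _ (List.mem_map.2 ⟨V, by simp, rfl⟩)
      rw [gsat_bigAnd_iff] at h1
      have h2 := h1 _ (List.mem_map.2 ⟨w, by simp, rfl⟩)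
      simp only [gsat, conAtom, gIntervene] at h2
      exact h2 _ ⟨p, hp, rfl⟩ _ ⟨q, hq, rfl⟩ (fun _ h => absurd h List.not_mem_nil)
    · intro h φ hφ
      obtain ⟨V, _, rfl⟩ := List.mem_map.1 hφ
      rw [gsat_bigAnd_iff]
      intro ψ hψ
      obtain ⟨w, _, rfl⟩ := List.mem_map.1 hψ
      simp only [gsat, conAtom, gIntervene]
      rintro p' ⟨p, hp, rfl⟩ q' ⟨q, hq, rfl⟩ -
      exact h V w p hp q hq
  have hcon : gsat S (bigAnd ((Finset.univ : Finset Var).toList.map conAtom)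
        : Formula Var Val) ↔ ∀ p ∈ S, ∀ q ∈ S, p.1 = q.1 := by
    rw [gsat_bigAnd_iff]
    constructor
    · intro h p hp q hq
      funext V
      have := h _ (List.mem_map.2 ⟨V, by simp, rfl⟩)
      exact this p hp q hq (fun _ h => absurd h List.not_mem_nil)
    · intro h φ hφ
      obtain ⟨V, _, rfl⟩ := List.mem_map.1 hφ
      intro p hp q hq _
      rw [h p hp q hq]
  show gsat S (Formula.and _ _) ↔ _
  simp only [gsat]
  rw [hmu, hcon]
  constructor
  · rintro ⟨h1, h2⟩ p hp q hq
    have heq : p.1 = q.1 := h2 p hp q hq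
    refine ⟨heq, ?_⟩
    rw [sysEquiv_iff_intervene (hS p hp).1 (heq ▸ (hS q hq).1)]
    intro V w
    have := h1 V w p hp q hq
    rw [← heq] at this
    exact this
  · intro h
    constructor
    · intro V w p hp q hq
      have hpq := h p hp q hq
      have := (sysEquiv_iff_intervene (hS p hp).1 (hpq.1 ▸ (hS q hq).1)).1 hpq.2 V w
      rw [this, hpq.1]
    · exact fun p hp q hq => (h p hp q hq).1

lemma quotCardLE_zero_iff (S : GCT Var Val) : quotCardLE S 0 ↔ S = ∅ := by
  constructor
  · rintro ⟨R, hR, hcov⟩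
    have hR0 : R = ∅ := Finset.card_eq_zero.1 (Nat.le_zero.1 hR)
    subst hR0
    ext p
    simp only [Set.mem_empty_iff_false, iff_false]
    intro hp
    obtain ⟨q, hq, -⟩ := hcov p hp
    exact absurd hq (Finset.notMem_empty q)
  · rintro rfl
    exact ⟨∅, by simp, fun p hp => absurd hp (Set.notMem_empty p)⟩

lemma quotCardLE_one_iff (S : GCT Var Val) :
    quotCardLE S 1 ↔ ∀ p ∈ S, ∀ q ∈ S, pairEquiv p q := by
  constructor
  · rintro ⟨R, hR, hcov⟩ p hp q hq
    obtain ⟨r1, hr1, hpr1⟩ := hcov p hp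
    obtain ⟨r2, hr2, hqr2⟩ := hcov q hq
    have : r1 = r2 := Finset.card_le_one.1 hR r1 hr1 r2 hr2
    exact pairEquiv_trans hpr1 (this ▸ pairEquiv_symm hqr2)
  · intro h
    rcases S.eq_empty_or_nonempty with rfl | ⟨p, hp⟩
    · exact ⟨∅, by simp, fun p hp => absurd hp (Set.notMem_empty p)⟩
    · exact ⟨{p}, by simp, fun q hq => ⟨p, Finset.mem_singleton_self p, h q hq p hp⟩⟩

lemma quotCardLE_union {S₁ S₂ : GCT Var Val} {a b : ℕ}
    (h1 : quotCardLE S₁ a) (h2 : quotCardLE S₂ b) : quotCardLE (S₁ ∪ S₂) (a + b) := by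
  classical
  obtain ⟨R₁, hR₁, hc₁⟩ := h1
  obtain ⟨R₂, hR₂, hc₂⟩ := h2
  refine ⟨R₁ ∪ R₂, le_trans (Finset.card_union_le _ _) (by omega), ?_⟩
  rintro p (hp | hp)
  · obtain ⟨q, hq, hpq⟩ := hc₁ p hp
    exact ⟨q, Finset.mem_union_left _ hq, hpq⟩
  · obtain ⟨q, hq, hpq⟩ := hc₂ p hp
    exact ⟨q, Finset.mem_union_right _ hq, hpq⟩

lemma quotCardLE_split {S : GCT Var Val} {k : ℕ} (h : quotCardLE S (k + 1)) :
    ∃ S₁ S₂ : GCT Var Val, S₁ ∪ S₂ = S ∧ quotCardLE S₁ 1 ∧ quotCardLE S₂ k := by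
  classical
  obtain ⟨R, hR, hcov⟩ := h
  rcases R.eq_empty_or_nonempty with rfl | ⟨r, hr⟩
  · have hS : S = ∅ := by
      ext p
      simp only [Set.mem_empty_iff_false, iff_false]
      intro hp
      obtain ⟨q, hq, -⟩ := hcov p hp
      exact absurd hq (Finset.notMem_empty q)
    refine ⟨∅, ∅, by simp [hS], ?_, ?_⟩ <;>
      exact ⟨∅, by simp, fun p hp => absurd hp (Set.notMem_empty p)⟩
  · refine ⟨{p ∈ S | pairEquiv p r}, {p ∈ S | ¬ pairEquiv p r}, ?_, ?_, ?_⟩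
    · ext p
      by_cases hp : pairEquiv p r <;> simp [hp]
    · rw [quotCardLE_one_iff]
      rintro p ⟨-, hp⟩ q ⟨-, hq⟩
      exact pairEquiv_trans hp (pairEquiv_symm hq)
    · refine ⟨R.erase r, by rw [Finset.card_erase_of_mem hr]; omega, ?_⟩
      rintro p ⟨hpS, hpr⟩
      obtain ⟨q, hq, hpq⟩ := hcov p hpS
      refine ⟨q, Finset.mem_erase.2 ⟨?_, hq⟩, hpq⟩
      rintro rfl
      exact hpr hpq

lemma gsat_chiK_iff (k : ℕ) (S : GCT Var Val) (hS : IsGCT S) :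
    gsat S (chiK k : Formula Var Val) ↔ quotCardLE S k := by
  induction k generalizing S with
  | zero =>
    rw [chiK, gsat_falsum_iff, quotCardLE_zero_iff]
  | succ n ih =>
    cases n with
    | zero =>
      rw [show (chiK 1 : Formula Var Val) = chiForm from rfl,
        gsat_chiForm_iff S hS, quotCardLE_one_iff]
    | succ m =>
      show gsat S (Formula.or chiForm (chiK (m + 1))) ↔ _
      constructor
      · rintro ⟨S₁, S₂, hU, h1, h2⟩
        have hS₁ : IsGCT S₁ := hS.mono (by rw [← hU]; exact Set.subset_union_left)
        have hS₂ : IsGCT S₂ := hS.mono (by rw [← hU]; exact Set.subset_union_right)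
        rw [gsat_chiForm_iff S₁ hS₁, ← quotCardLE_one_iff] at h1
        rw [ih S₂ hS₂] at h2
        rw [← hU]
        have := quotCardLE_union h1 h2
        rwa [add_comm] at this
      · intro h
        obtain ⟨S₁, S₂, hU, h1, h2⟩ := quotCardLE_split h
        have hS₁ : IsGCT S₁ := hS.mono (by rw [← hU]; exact Set.subset_union_left)
        have hS₂ : IsGCT S₂ := hS.mono (by rw [← hU]; exact Set.subset_union_right)
        exact ⟨S₁, S₂, hU, (gsat_chiForm_iff S₁ hS₁).2 ((quotCardLE_one_iff S₁).1 h1),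
          (ih S₂ hS₂).2 h2⟩

end SemLemmas

lemma gctEquiv_singleton {p q : Assign Var Val × FuncSystem Var Val} (h : pairEquiv p q) :
    gctEquiv ({p} : GCT Var Val) ({q} : GCT Var Val) := by
  intro F
  ext s
  simp only [Set.mem_setOf_eq, Set.mem_singleton_iff]
  constructor
  · rintro ⟨G, hG, hGF⟩
    have hs : s = p.1 := by rw [← hG]
    have hG2 : G = p.2 := by rw [← hG]
    refine ⟨q.2, ?_, sysEquiv_trans (sysEquiv_symm h.2) (hG2 ▸ hGF)⟩
    rw [hs, h.1]
  · rintro ⟨G, hG, hGF⟩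
    have hs : s = q.1 := by rw [← hG]
    have hG2 : G = q.2 := by rw [← hG]
    refine ⟨p.2, ?_, sysEquiv_trans h.2 (hG2 ▸ hGF)⟩
    rw [hs, ← h.1]

lemma mem_equiv_of_gctEquiv {A B : GCT Var Val} (h : gctEquiv A B)
    {p : Assign Var Val × FuncSystem Var Val} (hp : p ∈ A) :
    ∃ q ∈ B, pairEquiv p q := by
  have h1 : p.1 ∈ {s | ∃ G, (s, G) ∈ A ∧ sysEquiv G p.2} :=
    ⟨p.2, by rwa [Prod.mk.eta], sysEquiv_refl _⟩
  rw [h p.2] at h1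
  obtain ⟨G, hG, hGF⟩ := h1
  exact ⟨(p.1, G), hG, ⟨rfl, sysEquiv_symm hGF⟩⟩

lemma sle_singleton {p q : Assign Var Val × FuncSystem Var Val} (h : pairEquiv p q)
    {X : GCT Var Val} (hq : q ∈ X) : sle ({p} : GCT Var Val) X :=
  ⟨{q}, gctEquiv_singleton h, Set.singleton_subset_iff.2 hq⟩

lemma sle_of_forall_singleton {T S : GCT Var Val}
    (h : ∀ p ∈ T, sle ({p} : GCT Var Val) S) : sle T S := by
  refine ⟨{q ∈ S | ∃ p ∈ T, pairEquiv q p}, ?_, fun q hq => hq.1⟩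
  intro F
  ext s
  simp only [Set.mem_setOf_eq]
  constructor
  · rintro ⟨G, hG, hGF⟩
    obtain ⟨R, hRe, hRS⟩ := h (s, G) hG
    obtain ⟨q, hqR, hq⟩ := mem_equiv_of_gctEquiv hRe rfl
    have hqs : (s, q.2) = q := by
      rw [show s = q.1 from hq.1]
    refine ⟨q.2, ?_, sysEquiv_trans (sysEquiv_symm hq.2) hGF⟩
    rw [hqs]
    exact ⟨hRS hqR, (s, G), hG, pairEquiv_symm hq⟩
  · rintro ⟨G, ⟨hGS, p, hpT, hpe⟩, hGF⟩
    have hps : (s, p.2) = p := by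
      rw [show s = p.1 from hpe.1]
    refine ⟨p.2, ?_, sysEquiv_trans (sysEquiv_symm hpe.2) hGF⟩
    rw [hps]
    exact hpT



end AuxLemmas

/-- the formula Ξ^T := χ_k ∨ Θ^(complement of T⁻) ∨ the tensor disjunction
of Θ^({s}) ∧ Φ^F over the pairs (s,F) with s ∈ T⁻ and {(s,F)} not ≼ T, defines the
complement of the set of ≼-predecessors of T: a generalized causal team S satisfies Ξ^T
iff T is not ≼ S (where T is nonempty with |T/≈| = k+1, Φ^F is the CO-formula
characterizing the function components similar to F, and L enumerates the pairs of the
big disjunction). -/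
theorem xi_defines_non_predecessors {Var : Type} [Fintype Var] [DecidableEq Var] [Nonempty Var]
    {Val : Var → Type} [∀ V, Fintype (Val V)] [∀ V, Nonempty (Val V)]
    (T : GCT Var Val) (hT : IsGCT T) (hTne : T.Nonempty) (k : ℕ)
    (hcard : quotCardLE T (k + 1) ∧ ¬ quotCardLE T k)
    (Phi : FuncSystem Var Val → Formula Var Val)
    (hPhiCO : ∀ F, IsCO (Phi F))
    (hPhi : ∀ (F : FuncSystem Var Val) (R : GCT Var Val), IsGCT R →
        (gsat R (Phi F) ↔ ∀ p ∈ R, sysEquiv p.2 F))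
    (L : List (Assign Var Val × FuncSystem Var Val))
    (hL : ∀ p : Assign Var Val × FuncSystem Var Val,
        p ∈ L ↔ (p.1 ∈ teamOf T ∧ ¬ sle ({p} : GCT Var Val) T)) :
    ∀ S : GCT Var Val, IsGCT S →
      (gsat S (Formula.or (chiK k)
          (Formula.or (Theta (Set.toFinite (teamOf T)ᶜ).toFinset)
            (bigOr (L.map fun p =>
              Formula.and (Theta ({p.1} : Finset (Assign Var Val))) (Phi p.2))))) ↔
        ¬ sle T S) := by
  intro S hS
  constructor
  · -- forward direction
    intro hgs
    simp only [gsat] at hgs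
    obtain ⟨S₁, S₂, hU, h1, h2⟩ := hgs
    obtain ⟨S₂₁, S₂₂, hU2, h21, h22⟩ := h2
    rintro ⟨R, hRe, hRS⟩
    have key : ∀ p ∈ T, ∃ q ∈ S₁, pairEquiv p q := by
      intro p hp
      obtain ⟨q, hqR, hpq⟩ := mem_equiv_of_gctEquiv hRe hp
      have hqS : q ∈ S := hRS hqR
      rw [← hU] at hqS
      rcases hqS with hq1 | hq2
      · exact ⟨q, hq1, hpq⟩
      rw [← hU2] at hq2
      rcases hq2 with hq21 | hq22
      · exfalso
        rw [gsat_Theta_iff] at h21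
        have hmem := h21 q hq21
        rw [Set.Finite.mem_toFinset, Set.mem_compl_iff] at hmem
        exact hmem ⟨p, hp, hpq.1⟩
      · exfalso
        obtain ⟨φ, hφ, R', hR'sub, hqR', hgR'⟩ := gsat_bigOr_elim h22 q hq22
        obtain ⟨r, hrL, rfl⟩ := List.mem_map.1 hφ
        simp only [gsat] at hgR'
        obtain ⟨hθ, hΦ⟩ := hgR'
        have hR'S : R' ⊆ S := fun x hx => by
          rw [← hU]; right; rw [← hU2]; right; exact hR'sub hx
        rw [gsat_Theta_iff] at hθ
        have hq1 : q.1 = r.1 := Finset.mem_singleton.1 (hθ q hqR')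
        have hq2 : sysEquiv q.2 r.2 :=
          (hPhi r.2 R' (hS.mono hR'S)).1 hΦ q hqR'
        refine ((hL r).1 hrL).2 (sle_singleton ⟨?_, ?_⟩ hp)
        · rw [← hq1, ← hpq.1]
        · exact sysEquiv_trans (sysEquiv_symm hq2) (sysEquiv_symm hpq.2)
    have hS₁ : IsGCT S₁ := hS.mono (by rw [← hU]; exact Set.subset_union_left)
    rw [gsat_chiK_iff k S₁ hS₁] at h1
    obtain ⟨R₁, hR₁, hcov₁⟩ := h1
    refine hcard.2 ⟨R₁, hR₁, fun p hp => ?_⟩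
    obtain ⟨q, hqS₁, hpq⟩ := key p hp
    obtain ⟨ρ, hρ, hqρ⟩ := hcov₁ q hqS₁
    exact ⟨ρ, hρ, pairEquiv_trans hpq hqρ⟩
  · -- backward direction
    intro hns
    have hbad : ∃ p₀ ∈ T, ¬ sle ({p₀} : GCT Var Val) S := by
      by_contra hcon
      push_neg at hcon
      exact hns (sle_of_forall_singleton hcon)
    obtain ⟨p₀, hp₀T, hp₀⟩ := hbad
    set S₁ : GCT Var Val :=
      {q ∈ S | q.1 ∈ teamOf T ∧ sle ({q} : GCT Var Val) T} with hS₁def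
    set S₂ : GCT Var Val := {q ∈ S | q.1 ∉ teamOf T} with hS₂def
    set S₃ : GCT Var Val :=
      {q ∈ S | q.1 ∈ teamOf T ∧ ¬ sle ({q} : GCT Var Val) T} with hS₃def
    have hU : S₁ ∪ (S₂ ∪ S₃) = S := by
      ext q
      simp only [Set.mem_union, hS₁def, hS₂def, hS₃def, Set.mem_setOf_eq]
      constructor
      · rintro (⟨h, -⟩ | ⟨h, -⟩ | ⟨h, -⟩) <;> exact h
      · intro hq
        by_cases h1 : q.1 ∈ teamOf T
        · by_cases h2 : sle ({q} : GCT Var Val) T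
          · exact Or.inl ⟨hq, h1, h2⟩
          · exact Or.inr (Or.inr ⟨hq, h1, h2⟩)
        · exact Or.inr (Or.inl ⟨hq, h1⟩)
    simp only [gsat]
    refine ⟨S₁, S₂ ∪ S₃, hU, ?_, S₂, S₃, rfl, ?_, ?_⟩
    · -- S₁ satisfies chiK k
      have hS₁S : S₁ ⊆ S := fun q hq => hq.1
      rw [gsat_chiK_iff k S₁ (hS.mono hS₁S)]
      obtain ⟨R_T, hle, hcov⟩ := hcard.1
      obtain ⟨r₀, hr₀, hp₀r₀⟩ := hcov p₀ hp₀T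
      refine ⟨R_T.erase r₀, by rw [Finset.card_erase_of_mem hr₀]; omega, ?_⟩
      rintro q ⟨hqS, hqT, Rq, hRqe, hRqT⟩
      obtain ⟨r, hrRq, hqr⟩ := mem_equiv_of_gctEquiv hRqe rfl
      obtain ⟨ρ, hρ, hrρ⟩ := hcov r (hRqT hrRq)
      refine ⟨ρ, Finset.mem_erase.2 ⟨?_, hρ⟩, pairEquiv_trans hqr hrρ⟩
      rintro rfl
      exact hp₀ (sle_singleton (pairEquiv_trans hp₀r₀
        (pairEquiv_trans (pairEquiv_symm hrρ) (pairEquiv_symm hqr))) hqS)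
    · -- S₂ satisfies Theta of the complement
      rw [gsat_Theta_iff]
      intro q hq
      rw [Set.Finite.mem_toFinset, Set.mem_compl_iff]
      exact hq.2
    · -- S₃ satisfies the big disjunction
      refine gsat_bigOr_map_intro L _
        (fun i => {q ∈ S₃ | pairEquiv q (L.get i)}) ?_ ?_
      · ext q
        simp only [Set.mem_iUnion, Set.mem_setOf_eq]
        constructor
        · rintro ⟨i, hq, -⟩; exact hq
        · intro hq
          have hqL : q ∈ L := (hL q).2 ⟨hq.2.1, hq.2.2⟩
          obtain ⟨i, hi⟩ := List.mem_iff_get.1 hqL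
          exact ⟨i, hq, hi ▸ pairEquiv_refl q⟩
      · intro i
        have hsub : {q ∈ S₃ | pairEquiv q (L.get i)} ⊆ S :=
          fun q hq => hq.1.1
        refine ⟨?_, ?_⟩
        · rw [gsat_Theta_iff]
          rintro q ⟨-, hqe⟩
          exact Finset.mem_singleton.2 hqe.1
        · refine (hPhi (L.get i).2 _ (hS.mono hsub)).2 ?_
          rintro q ⟨-, hqe⟩
          exact hqe.2

end CausalTeams
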